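/- Let p, q, r be fixed positive integers with gcd(p,q,r)=1 and let t = gcd(p,q). Let n be a positive integer and let a be the unique integer with 0 ≤ a < t such that t divides n−a. Then the interval I_n = {⌊r(n−a)/(p+q)⌋+1, ..., n} contains no solution (x,y,z) with x,y,z ∈ I_n to the equation p·x + q·y = r·z. -/
import Mathlib


/-- The interval `I_n = {⌊r(n-a)/(p+q)⌋+1, ..., n}`, where `a = n mod gcd(p,q)`,
contains no solution to `p·x + q·y = r·z`. -/
theorem stmt0 (p q r n : ℕ) (hp : 0 < p) (hq : 0 < q) (hr : 0 < r) (hn : 0 < n)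
    (hgcd : Nat.gcd (Nat.gcd p q) r = 1) :
    ∀ x ∈ Finset.Icc (r * (n - n % Nat.gcd p q) / (p + q) + 1) n,
    ∀ y ∈ Finset.Icc (r * (n - n % Nat.gcd p q) / (p + q) + 1) n,
    ∀ z ∈ Finset.Icc (r * (n - n % Nat.gcd p q) / (p + q) + 1) n,
      p * x + q * y ≠ r * z := by
  intro x hx y hy z hz h
  simp only [Finset.mem_Icc] at hx hy hz
  set t := Nat.gcd p q with ht
  set m := r * (n - n % t) / (p + q) with hm
  have htpos : 0 < t := Nat.gcd_pos_of_pos_left _ hp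
  have hdvd : t ∣ p * x + q * y :=
    Dvd.dvd.add ((Nat.gcd_dvd_left p q).mul_right x) ((Nat.gcd_dvd_right p q).mul_right y)
  have htz : t ∣ z := by
    have : t ∣ r * z := h ▸ hdvd
    exact (Nat.Coprime.dvd_of_dvd_mul_left hgcd this)
  have hzle : z ≤ n - n % t := by
    obtain ⟨k, hk⟩ := htz
    have hk' : k ≤ n / t := by
      rw [Nat.le_div_iff_mul_le htpos, mul_comm, ← hk]
      exact hz.2
    have h2 : z ≤ t * (n / t) := by
      rw [hk]; exact Nat.mul_le_mul_left t hk'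
    have := Nat.div_add_mod n t
    omega
  have h1 : r * (n - n % t) < (m + 1) * (p + q) := by
    rw [hm]
    exact (Nat.div_lt_iff_lt_mul (by omega)).mp (Nat.lt_succ_self m)
  have h2 : (m + 1) * (p + q) ≤ p * x + q * y := by
    have := hx.1
    have := hy.1
    nlinarith
  have h3 : r * z ≤ r * (n - n % t) := Nat.mul_le_mul_left r hzle
  rw [h] at h2
  omega
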